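/- (a) For every x > 0, φ(x) = B₁ + ((2α − 1)·b₀)/(2(α − 1)·x) + (b₀·c₂·Δt/(2(α − 1)))·x^{2α−3} + (x/(2(α − 1)))·φ'(x); in particular φ(x) > 0 at every critical point of φ (every x > 0 with φ'(x) = 0). (b) φ has exactly one zero ξ in (0,∞), and φ(x) > 0 for all 0 < x < ξ while φ(x) < 0 for all x > ξ. -/

import Mathlib

noncomputable section

/-- The function φ_{Δt}(x) = B₁ − c₁x^{2(α−1)} + b₀/x + b₀c₂Δt·x^{2α−3} governing the
asymptotic stability of the exponential Euler scheme (c₁ = Σ²/2 + B₂, c₂ = Σ² + B₂). -/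
def phiStab (α b₀ B₁ c₁ c₂ Δt : ℝ) (x : ℝ) : ℝ :=
  B₁ - c₁ * x ^ (2 * (α - 1)) + b₀ / x + b₀ * c₂ * Δt * x ^ (2 * α - 3)

lemma phi_hasDerivAt (α b₀ B₁ c₁ c₂ Δt : ℝ) {x : ℝ} (hx : 0 < x) :
    HasDerivAt (phiStab α b₀ B₁ c₁ c₂ Δt)
      (-(c₁ * (2 * (α - 1) * x ^ (2 * (α - 1) - 1))) + b₀ * (-(x ^ 2)⁻¹)
        + b₀ * c₂ * Δt * ((2 * α - 3) * x ^ (2 * α - 3 - 1))) x := by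
  have h1 : HasDerivAt (fun y : ℝ => y ^ (2 * (α - 1))) ((2 * (α - 1)) * x ^ (2 * (α - 1) - 1)) x :=
    Real.hasDerivAt_rpow_const (Or.inl hx.ne')
  have h2 : HasDerivAt (fun y : ℝ => y ^ (2 * α - 3)) ((2 * α - 3) * x ^ (2 * α - 3 - 1)) x :=
    Real.hasDerivAt_rpow_const (Or.inl hx.ne')
  have h3 : HasDerivAt (fun y : ℝ => y⁻¹) (-(x ^ 2)⁻¹) x := hasDerivAt_inv hx.ne'
  have := (((hasDerivAt_const x B₁).sub (h1.const_mul c₁)).add (h3.const_mul b₀)).add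
    (h2.const_mul (b₀ * c₂ * Δt))
  unfold phiStab
  refine (this.congr_deriv (by ring)).congr_of_eventuallyEq (Filter.Eventually.of_forall fun y => ?_)
  simp only [Pi.add_apply, Pi.sub_apply]; ring

lemma phi_identity (α b₀ B₁ c₁ c₂ Δt : ℝ) (hα : 1 < α) {x : ℝ} (hx : 0 < x) :
    phiStab α b₀ B₁ c₁ c₂ Δt x
        = B₁ + (2 * α - 1) * b₀ / (2 * (α - 1) * x)
          + b₀ * c₂ * Δt / (2 * (α - 1)) * x ^ (2 * α - 3)
          + x / (2 * (α - 1)) * deriv (phiStab α b₀ B₁ c₁ c₂ Δt) x := by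
  rw [(phi_hasDerivAt α b₀ B₁ c₁ c₂ Δt hx).deriv]
  have e1 : x ^ (2 * (α - 1)) = x ^ (2 * α - 2) := by ring_nf
  have e2 : (2 * (α - 1) - 1 : ℝ) = 2 * α - 3 := by ring
  have e3 : (2 * α - 3 - 1 : ℝ) = 2 * α - 4 := by ring
  have h2 : x ^ (2 * α - 3) = x ^ (2 * α - 2) / x := by
    rw [show (2 * α - 3 : ℝ) = (2 * α - 2) - 1 by ring, Real.rpow_sub hx, Real.rpow_one]
  have h4 : x ^ (2 * α - 4 : ℝ) = x ^ (2 * α - 2) / x / x := by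
    rw [show (2 * α - 4 : ℝ) = (2 * α - 3) - 1 by ring, Real.rpow_sub hx, Real.rpow_one, h2]
  have hx' : x ≠ 0 := hx.ne'
  have hα' : (2 * (α - 1) : ℝ) ≠ 0 := by nlinarith
  have hα1 : (α - 1 : ℝ) ≠ 0 := by linarith
  unfold phiStab
  rw [e1, e2, e3, h2, h4]
  field_simp
  ring

variable {α b₀ B₁ c₁ c₂ Δt : ℝ}

lemma phi_continuousOn (α b₀ B₁ c₁ c₂ Δt : ℝ) : ContinuousOn (phiStab α b₀ B₁ c₁ c₂ Δt) (Set.Ioi 0) := by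
  intro x hx
  have hx' : (x : ℝ) ≠ 0 := ne_of_gt hx
  have h1 : ContinuousAt (fun y : ℝ => y ^ (2 * (α - 1))) x :=
    Real.continuousAt_rpow_const x _ (Or.inl hx')
  have h2 : ContinuousAt (fun y : ℝ => y ^ (2 * α - 3)) x :=
    Real.continuousAt_rpow_const x _ (Or.inl hx')
  have h3 : ContinuousAt (fun y : ℝ => b₀ / y) x := (continuousAt_const.div continuousAt_id hx')
  exact (((continuousAt_const.sub (h1.const_mul c₁)).add h3).add
    (h2.const_mul (b₀ * c₂ * Δt))).continuousWithinAt

lemma phi_pos_small (hα : 1 < α) (hb₀ : 0 < b₀) (hB₁ : 0 ≤ B₁) (hc₁ : 0 < c₁)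
    (hc₂ : 0 ≤ c₂) (hΔt : 0 ≤ Δt)
    {x : ℝ} (hx : 0 < x) (hx1 : x ≤ 1) (hxc : c₁ * x < b₀) :
    0 < phiStab α b₀ B₁ c₁ c₂ Δt x := by
  have hp1 : x ^ (2 * (α - 1)) ≤ 1 :=
    Real.rpow_le_one hx.le hx1 (by nlinarith : (0:ℝ) ≤ 2 * (α - 1))
  have h4 : c₁ < b₀ / x := (lt_div_iff₀ hx).mpr (by linarith)
  have h5 : 0 ≤ b₀ * c₂ * Δt * x ^ (2 * α - 3) :=
    mul_nonneg (by positivity) (Real.rpow_nonneg hx.le _)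
  have h6 : c₁ * x ^ (2 * (α - 1)) ≤ c₁ := by nlinarith
  unfold phiStab; linarith

lemma phi_neg_large (hα : 1 < α) (hb₀ : 0 < b₀) (hc₁ : 0 < c₁) (hc₂ : 0 ≤ c₂) (hΔt : 0 ≤ Δt)
    {x : ℝ} (hx1 : 1 ≤ x) (hxc : 2 * (b₀ * c₂ * Δt) ≤ c₁ * x)
    (hxk : 2 * (B₁ + b₀) < c₁ * x ^ (2 * α - 2)) :
    phiStab α b₀ B₁ c₁ c₂ Δt x < 0 := by
  have hx : (0:ℝ) < x := lt_of_lt_of_le one_pos hx1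
  have hp : 0 < x ^ (2 * α - 2) := Real.rpow_pos_of_pos hx _
  have e1 : x ^ (2 * (α - 1)) = x ^ (2 * α - 2) := by ring_nf
  have h2 : x ^ (2 * α - 3) = x ^ (2 * α - 2) / x := by
    rw [show (2 * α - 3 : ℝ) = (2 * α - 2) - 1 by ring, Real.rpow_sub hx, Real.rpow_one]
  have h3 : b₀ / x ≤ b₀ := by
    rw [div_le_iff₀ hx]; nlinarith
  have h4 : b₀ * c₂ * Δt * (x ^ (2 * α - 2) / x) ≤ c₁ / 2 * x ^ (2 * α - 2) := by
    rw [mul_div_assoc', div_le_iff₀ hx]; nlinarith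
  unfold phiStab
  rw [e1, h2]
  nlinarith

lemma phi_neg_exists (hα : 1 < α) (hb₀ : 0 < b₀) (hB₁ : 0 ≤ B₁) (hc₁ : 0 < c₁)
    (hc₂ : 0 ≤ c₂) (hΔt : 0 ≤ Δt) (M : ℝ) :
    ∃ b : ℝ, M < b ∧ phiStab α b₀ B₁ c₁ c₂ Δt b < 0 := by
  obtain ⟨K, hKdef⟩ : ∃ K : ℝ, K = 2 * (B₁ + b₀) / c₁ + 1 := ⟨_, rfl⟩
  have hK0 : 0 ≤ 2 * (B₁ + b₀) / c₁ := by positivity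
  have hK1 : (1:ℝ) ≤ K := by rw [hKdef]; linarith
  have hp : (0:ℝ) < 2 * α - 2 := by linarith
  obtain ⟨b, hbdef⟩ : ∃ b : ℝ,
      b = max (M + 1) (max 1 (max (2 * (b₀ * c₂ * Δt) / c₁) (K ^ ((2 * α - 2)⁻¹)))) := ⟨_, rfl⟩
  have hMb : M < b := lt_of_lt_of_le (by linarith) (hbdef ▸ le_max_left _ _)
  have hb1 : 1 ≤ b := hbdef ▸ le_trans (le_max_left 1 _) (le_max_right _ _)
  have hbc : 2 * (b₀ * c₂ * Δt) / c₁ ≤ b :=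
    hbdef ▸ le_trans (le_trans (le_max_left _ _) (le_max_right 1 _)) (le_max_right _ _)
  have hbK : K ^ ((2 * α - 2)⁻¹) ≤ b :=
    hbdef ▸ le_trans (le_trans (le_max_right _ _) (le_max_right 1 _)) (le_max_right _ _)
  refine ⟨b, hMb, phi_neg_large hα hb₀ hc₁ hc₂ hΔt hb1 ?_ ?_⟩
  · rw [div_le_iff₀ hc₁] at hbc; linarith [mul_comm b c₁]
  · have hKpow : K ≤ b ^ (2 * α - 2) := by
      calc K = (K ^ ((2 * α - 2)⁻¹)) ^ (2 * α - 2) := by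
              rw [← Real.rpow_mul (by linarith : (0:ℝ) ≤ K), inv_mul_cancel₀ hp.ne',
                Real.rpow_one]
        _ ≤ b ^ (2 * α - 2) :=
              Real.rpow_le_rpow (Real.rpow_nonneg (by linarith) _) hbK hp.le
    have hcK : c₁ * K = 2 * (B₁ + b₀) + c₁ := by
      rw [hKdef]; field_simp
    nlinarith

lemma phi_crit_pos (hα : 1 < α) (hb₀ : 0 < b₀) (hB₁ : 0 ≤ B₁) (hc₂ : 0 ≤ c₂) (hΔt : 0 ≤ Δt)
    {x : ℝ} (hx : 0 < x) (hd : deriv (phiStab α b₀ B₁ c₁ c₂ Δt) x = 0) :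
    0 < phiStab α b₀ B₁ c₁ c₂ Δt x := by
  rw [phi_identity α b₀ B₁ c₁ c₂ Δt hα hx, hd]
  have t1 : 0 < (2 * α - 1) * b₀ / (2 * (α - 1) * x) :=
    div_pos (by nlinarith) (by nlinarith)
  have t2 : 0 ≤ b₀ * c₂ * Δt / (2 * (α - 1)) * x ^ (2 * α - 3) :=
    mul_nonneg (div_nonneg (by positivity) (by linarith)) (Real.rpow_nonneg hx.le _)
  nlinarith

lemma phi_deriv_neg_at_zero (hα : 1 < α) (hb₀ : 0 < b₀) (hB₁ : 0 ≤ B₁)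
    (hc₂ : 0 ≤ c₂) (hΔt : 0 ≤ Δt)
    {x : ℝ} (hx : 0 < x) (h0 : phiStab α b₀ B₁ c₁ c₂ Δt x = 0) :
    deriv (phiStab α b₀ B₁ c₁ c₂ Δt) x < 0 := by
  have hid := phi_identity α b₀ B₁ c₁ c₂ Δt hα hx
  rw [h0] at hid
  have t1 : 0 < (2 * α - 1) * b₀ / (2 * (α - 1) * x) :=
    div_pos (by nlinarith) (by nlinarith)
  have t2 : 0 ≤ b₀ * c₂ * Δt / (2 * (α - 1)) * x ^ (2 * α - 3) :=
    mul_nonneg (div_nonneg (by positivity) (by linarith)) (Real.rpow_nonneg hx.le _)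
  by_contra h
  push_neg at h
  have hpos : 0 < x / (2 * (α - 1)) := div_pos hx (by linarith)
  nlinarith [mul_nonneg hpos.le h]

lemma phi_no_two_zeros (hα : 1 < α) (hb₀ : 0 < b₀) (hB₁ : 0 ≤ B₁)
    (hc₂ : 0 ≤ c₂) (hΔt : 0 ≤ Δt)
    {x y : ℝ} (hx : 0 < x) (hxy : x < y)
    (h0x : phiStab α b₀ B₁ c₁ c₂ Δt x = 0) (h0y : phiStab α b₀ B₁ c₁ c₂ Δt y = 0) : False := by
  set φ := phiStab α b₀ B₁ c₁ c₂ Δt with hφ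
  have hy : 0 < y := hx.trans hxy
  -- derivative negative at x, so φ < 0 just to the right of x
  have hD := phi_hasDerivAt α b₀ B₁ c₁ c₂ Δt hx
  have hdx : deriv φ x < 0 := phi_deriv_neg_at_zero hα hb₀ hB₁ hc₂ hΔt hx h0x
  rw [hD.deriv] at hdx
  have hslope := hasDerivAt_iff_tendsto_slope.mp hD
  have hev : ∀ᶠ z in nhdsWithin x {x}ᶜ, slope φ x z < 0 :=
    hslope.eventually_lt_const hdx
  have hmono : nhdsWithin x (Set.Ioi x) ≤ nhdsWithin x {x}ᶜ :=
    nhdsWithin_mono x (fun z hz => ne_of_gt hz)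
  have hev' : ∀ᶠ z in nhdsWithin x (Set.Ioi x), slope φ x z < 0 ∧ z ∈ Set.Ioo x y :=
    (hev.filter_mono hmono).and
      (Filter.eventually_of_mem (Ioo_mem_nhdsGT_of_mem ⟨le_refl x, hxy⟩) fun z hz => hz)
  obtain ⟨z, hz1, hz2⟩ := hev'.exists
  have hzx : 0 < z - x := sub_pos.mpr hz2.1
  rw [slope_def_field] at hz1
  have hφz : φ z < 0 := by
    rcases div_neg_iff.mp hz1 with ⟨h1, _⟩ | ⟨_, h2⟩
    · rw [h0x] at h1; linarith
    · linarith
  -- compact minimum on [x, y]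
  have hsub : Set.Icc x y ⊆ Set.Ioi (0:ℝ) := fun w hw => lt_of_lt_of_le hx hw.1
  obtain ⟨c, hcmem, hcmin⟩ := isCompact_Icc.exists_isMinOn (Set.nonempty_Icc.mpr hxy.le)
    ((phi_continuousOn α b₀ B₁ c₁ c₂ Δt).mono hsub)
  have hφc : φ c < 0 := lt_of_le_of_lt (hcmin ⟨hz2.1.le, hz2.2.le⟩) hφz
  have hcx : x < c := lt_of_le_of_ne hcmem.1 (by rintro rfl; rw [h0x] at hφc; linarith)
  have hcy : c < y := lt_of_le_of_ne hcmem.2 (by rintro h; rw [h, h0y] at hφc; linarith) 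
  have hloc : IsLocalMin φ c := hcmin.isLocalMin (Icc_mem_nhds hcx hcy)
  have hd0 : deriv φ c = 0 := hloc.deriv_eq_zero
  have := phi_crit_pos hα hb₀ hB₁ hc₂ hΔt (hx.trans hcx) hd0
  rw [← hφ] at this
  linarith

theorem stability_function_scheme_unique_zero
    (α b₀ B₁ c₁ c₂ Δt : ℝ) (hα : 1 < α) (hb₀ : 0 < b₀) (hB₁ : 0 ≤ B₁)
    (hc₁ : 0 < c₁) (hc₂ : 0 ≤ c₂) (hΔt : 0 ≤ Δt) :
    (∀ x : ℝ, 0 < x →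
      phiStab α b₀ B₁ c₁ c₂ Δt x
        = B₁ + (2 * α - 1) * b₀ / (2 * (α - 1) * x)
          + b₀ * c₂ * Δt / (2 * (α - 1)) * x ^ (2 * α - 3)
          + x / (2 * (α - 1)) * deriv (phiStab α b₀ B₁ c₁ c₂ Δt) x) ∧
    (∀ x : ℝ, 0 < x → deriv (phiStab α b₀ B₁ c₁ c₂ Δt) x = 0 →
      0 < phiStab α b₀ B₁ c₁ c₂ Δt x) ∧
    ∃ ξ : ℝ, 0 < ξ ∧ phiStab α b₀ B₁ c₁ c₂ Δt ξ = 0 ∧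
      (∀ x : ℝ, 0 < x → phiStab α b₀ B₁ c₁ c₂ Δt x = 0 → x = ξ) ∧
      (∀ x : ℝ, 0 < x → x < ξ → 0 < phiStab α b₀ B₁ c₁ c₂ Δt x) ∧
      (∀ x : ℝ, ξ < x → phiStab α b₀ B₁ c₁ c₂ Δt x < 0) := by
  set φ := phiStab α b₀ B₁ c₁ c₂ Δt with hφdef
  refine ⟨fun x hx => phi_identity α b₀ B₁ c₁ c₂ Δt hα hx,
    fun x hx hd => phi_crit_pos hα hb₀ hB₁ hc₂ hΔt hx hd, ?_⟩
  -- a point where φ > 0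
  obtain ⟨a, hadef⟩ : ∃ a : ℝ, a = min 1 (b₀ / (2 * c₁)) := ⟨_, rfl⟩
  have ha0 : 0 < a := by rw [hadef]; exact lt_min one_pos (by positivity)
  have ha1 : a ≤ 1 := hadef ▸ min_le_left _ _
  have hac : c₁ * a < b₀ := by
    have h1 : a ≤ b₀ / (2 * c₁) := hadef ▸ min_le_right _ _
    have : c₁ * a ≤ c₁ * (b₀ / (2 * c₁)) := by nlinarith
    have h2 : c₁ * (b₀ / (2 * c₁)) = b₀ / 2 := by field_simp
    linarith
  have hφa : 0 < φ a := phi_pos_small hα hb₀ hB₁ hc₁ hc₂ hΔt ha0 ha1 hac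
  -- a point beyond a where φ < 0
  obtain ⟨b, hab, hφb⟩ := phi_neg_exists hα hb₀ hB₁ hc₁ hc₂ hΔt (α := α) a
  -- intermediate value theorem
  have hsub : Set.Icc a b ⊆ Set.Ioi (0:ℝ) := fun w hw => lt_of_lt_of_le ha0 hw.1
  have hivt := intermediate_value_Icc' hab.le ((phi_continuousOn α b₀ B₁ c₁ c₂ Δt).mono hsub)
  obtain ⟨ξ, hξmem, hξ0⟩ := hivt ⟨hφb.le, hφa.le⟩
  have hξpos : 0 < ξ := lt_of_lt_of_le ha0 hξmem.1
  have uniq : ∀ x : ℝ, 0 < x → φ x = 0 → x = ξ := by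
    intro x hx h0
    rcases lt_trichotomy x ξ with h | h | h
    · exact absurd (phi_no_two_zeros hα hb₀ hB₁ hc₂ hΔt hx h h0 hξ0) (not_false)
    · exact h
    · exact absurd (phi_no_two_zeros hα hb₀ hB₁ hc₂ hΔt hξpos h hξ0 h0) (not_false)
  refine ⟨ξ, hξpos, hξ0, uniq, ?_, ?_⟩
  · intro x hx hxξ
    rcases lt_trichotomy 0 (φ x) with h | h | h
    · exact h
    · exact absurd (uniq x hx h.symm) (ne_of_lt hxξ)
    · exfalso
      obtain ⟨a', ha'def⟩ : ∃ a' : ℝ, a' = min (x / 2) (min 1 (b₀ / (2 * c₁))) := ⟨_, rfl⟩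
      have ha'0 : 0 < a' := by
        rw [ha'def]; exact lt_min (by linarith) (lt_min one_pos (by positivity))
      have ha'x : a' < x := lt_of_le_of_lt (ha'def ▸ min_le_left _ _) (by linarith)
      have ha'1 : a' ≤ 1 := le_trans (ha'def ▸ min_le_right _ _) (min_le_left _ _)
      have ha'c : c₁ * a' < b₀ := by
        have h1 : a' ≤ b₀ / (2 * c₁) := le_trans (ha'def ▸ min_le_right _ _) (min_le_right _ _)
        have : c₁ * a' ≤ c₁ * (b₀ / (2 * c₁)) := by nlinarith
        have h2 : c₁ * (b₀ / (2 * c₁)) = b₀ / 2 := by field_simp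
        linarith
      have hφa' : 0 < φ a' := phi_pos_small hα hb₀ hB₁ hc₁ hc₂ hΔt ha'0 ha'1 ha'c
      have hsub' : Set.Icc a' x ⊆ Set.Ioi (0:ℝ) := fun w hw => lt_of_lt_of_le ha'0 hw.1
      obtain ⟨z, hzmem, hz0⟩ := intermediate_value_Icc' ha'x.le
        ((phi_continuousOn α b₀ B₁ c₁ c₂ Δt).mono hsub') ⟨h.le, hφa'.le⟩
      have hz := uniq z (lt_of_lt_of_le ha'0 hzmem.1) hz0
      have : z ≤ x := hzmem.2
      rw [hz] at this
      linarith
  · intro x hξx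
    have hx : 0 < x := hξpos.trans hξx
    rcases lt_trichotomy (φ x) 0 with h | h | h
    · exact h
    · exact absurd (uniq x hx h) (ne_of_gt hξx)
    · exfalso
      obtain ⟨b', hxb', hφb'⟩ := phi_neg_exists hα hb₀ hB₁ hc₁ hc₂ hΔt (α := α) x
      have hsub' : Set.Icc x b' ⊆ Set.Ioi (0:ℝ) := fun w hw => lt_of_lt_of_le hx hw.1
      obtain ⟨z, hzmem, hz0⟩ := intermediate_value_Icc' hxb'.le
        ((phi_continuousOn α b₀ B₁ c₁ c₂ Δt).mono hsub') ⟨hφb'.le, h.le⟩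
      have hz := uniq z (lt_of_lt_of_le hx hzmem.1) hz0
      have : x ≤ z := hzmem.1
      rw [hz] at this
      linarith

end
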